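/- Assume the block setup and the nested QR setup, and suppose F_{j−1}^{(G)} has rank L. Let A𝕂_j(A,F₀) := {A x : x ∈ 𝕂_j(A,F₀)}. Let U ∈ ℂ^{n×L} have orthonormal columns spanning the column space of F_{j−1}^{(G)}, and let M ∈ ℂ^{n×jL} have orthonormal columns spanning A𝕂_j(A,F₀). Then the multiset of singular values of Uᴴ M (the cosines of the principal angles between the column space of the (j−1)-st block GMRES residual and the j-th minimum-residual constraint space A𝕂_j(A,F₀)) equals the multiset of singular values of Q_j^{(11)}; in other words, these principal angles are exactly the angles whose cosines appear in a CS decomposition of the trailing 2L×2L block of Q_j. -/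

import Mathlib

open Matrix

noncomputable section

set_option maxHeartbeats 1000000

/-- Squared Frobenius norm of a complex matrix. -/
def frobSq {a b : Type*} [Fintype a] [Fintype b] (M : Matrix a b ℂ) : ℝ :=
  ∑ r, ∑ c, Complex.normSq (M r c)

/-- The four Moore–Penrose conditions. -/
def IsMoorePenrose {a b : Type*} [Fintype a] [Fintype b]
    (M : Matrix a b ℂ) (P : Matrix b a ℂ) : Prop :=
  M * P * M = M ∧ P * M * P = P ∧ (M * P)ᴴ = M * P ∧ (P * M)ᴴ = P * M

/-- The block Krylov subspace `𝕂_i(A, F)`: the span of all columns of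
`F, A F, …, A^(i-1) F`. -/
def blockKrylov {n L : ℕ} (A : Matrix (Fin n) (Fin n) ℂ)
    (F : Matrix (Fin n) (Fin L) ℂ) (i : ℕ) : Submodule ℂ (Fin n → ℂ) :=
  Submodule.span ℂ { v | ∃ k < i, ∃ c : Fin L, v = fun r => (A ^ k * F) r c }

/-- `E_L^{[mL]}` : the first `L` columns of the `mL × mL` identity matrix
(block row indexing). -/
def EL (m L : ℕ) : Matrix (Fin m × Fin L) (Fin L) ℂ :=
  Matrix.of fun r c => if (r.1 : ℕ) = 0 ∧ r.2 = c then 1 else 0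

/-- An `L × L` matrix is upper triangular. -/
def utL {L : ℕ} (M : Matrix (Fin L) (Fin L) ℂ) : Prop :=
  ∀ a b : Fin L, (b : ℕ) < (a : ℕ) → M a b = 0

/-- A block-indexed `mL × mL` matrix is upper triangular. -/
def utBig {m L : ℕ} (M : Matrix (Fin m × Fin L) (Fin m × Fin L) ℂ) : Prop :=
  ∀ r c : Fin m × Fin L, (c.1 : ℕ) * L + (c.2 : ℕ) < (r.1 : ℕ) * L + (r.2 : ℕ) → M r c = 0

/-- Stack a block-tall matrix on top of an extra block row. -/
def vcat {m L : ℕ} {col : Type*} (T : Matrix (Fin m × Fin L) col ℂ)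
    (Bo : Matrix (Fin L) col ℂ) : Matrix (Fin (m+1) × Fin L) col ℂ :=
  Matrix.of fun r cc => if h : (r.1 : ℕ) < m then T (⟨r.1, h⟩, r.2) cc else Bo r.2 cc

/-- The block matrix `[[R, Z], [0, N]]`. -/
def twoBlock {m L : ℕ} (R : Matrix (Fin m × Fin L) (Fin m × Fin L) ℂ)
    (Z : Matrix (Fin m × Fin L) (Fin L) ℂ) (N : Matrix (Fin L) (Fin L) ℂ) :
    Matrix (Fin (m+1) × Fin L) (Fin (m+1) × Fin L) ℂ :=
  Matrix.of fun r c =>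
    if hr : (r.1 : ℕ) < m then
      if hc : (c.1 : ℕ) < m then R (⟨r.1, hr⟩, r.2) (⟨c.1, hc⟩, c.2)
      else Z (⟨r.1, hr⟩, r.2) c.2
    else
      if (c.1 : ℕ) < m then 0 else N r.2 c.2

/-- The block matrix `[[R, Z], [0, Hmid], [0, Hbot]]`. -/
def threeBlock {m L : ℕ} (R : Matrix (Fin m × Fin L) (Fin m × Fin L) ℂ)
    (Z : Matrix (Fin m × Fin L) (Fin L) ℂ) (Hmid Hbot : Matrix (Fin L) (Fin L) ℂ) :
    Matrix (Fin (m+2) × Fin L) (Fin (m+1) × Fin L) ℂ :=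
  Matrix.of fun r c =>
    if hr : (r.1 : ℕ) < m then
      if hc : (c.1 : ℕ) < m then R (⟨r.1, hr⟩, r.2) (⟨c.1, hc⟩, c.2)
      else Z (⟨r.1, hr⟩, r.2) c.2
    else
      if (c.1 : ℕ) < m then 0
      else if (r.1 : ℕ) = m then Hmid r.2 c.2 else Hbot r.2 c.2

/-- `diag(Q, I_L)` : extend a block-indexed square matrix by an identity block. -/
def extendOne {m L : ℕ} (Q : Matrix (Fin m × Fin L) (Fin m × Fin L) ℂ) :
    Matrix (Fin (m+1) × Fin L) (Fin (m+1) × Fin L) ℂ :=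
  Matrix.of fun r c =>
    if hr : (r.1 : ℕ) < m then
      if hc : (c.1 : ℕ) < m then Q (⟨r.1, hr⟩, r.2) (⟨c.1, hc⟩, c.2) else 0
    else
      if (c.1 : ℕ) < m then 0 else if r.2 = c.2 then 1 else 0

/-- `diag(I_{mL}, Q)` : an identity block, then `Q` in the bottom right corner. -/
def extendBot {m L : ℕ} (Q : Matrix (Fin L) (Fin L) ℂ) :
    Matrix (Fin (m+1) × Fin L) (Fin (m+1) × Fin L) ℂ :=
  Matrix.of fun r c =>
    if (r.1 : ℕ) < m ∨ (c.1 : ℕ) < m then (if r = c then 1 else 0)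
    else Q r.2 c.2

/-- The `(m+2)L × (m+2)L` matrix which is the identity outside of its trailing
principal `2L × 2L` block, which is `[[Q11, Q12], [Q21, Q22]]`. -/
def trailingTwo {m L : ℕ} (Q11 Q12 Q21 Q22 : Matrix (Fin L) (Fin L) ℂ) :
    Matrix (Fin (m+2) × Fin L) (Fin (m+2) × Fin L) ℂ :=
  Matrix.of fun r c =>
    if (r.1 : ℕ) < m ∨ (c.1 : ℕ) < m then (if r = c then 1 else 0)
    else if (r.1 : ℕ) = m then
      (if (c.1 : ℕ) = m then Q11 r.2 c.2 else Q12 r.2 c.2)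
    else
      (if (c.1 : ℕ) = m then Q21 r.2 c.2 else Q22 r.2 c.2)

/-- The block matrix `[R ; 0]` (one extra zero block row below `R`). -/
def stackZero {m L : ℕ} (R : Matrix (Fin m × Fin L) (Fin m × Fin L) ℂ) :
    Matrix (Fin (m+1) × Fin L) (Fin m × Fin L) ℂ :=
  Matrix.of fun r c => if h : (r.1 : ℕ) < m then R (⟨r.1, h⟩, r.2) c else 0

/-- A breakdown-free block Arnoldi decomposition of length `j = p + 1` for the block
linear system `A X = B` with initial guess `X₀` (block size `L`). -/
structure BlockArnoldi (n L p : ℕ) : Type where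
  A : Matrix (Fin n) (Fin n) ℂ
  B : Matrix (Fin n) (Fin L) ℂ
  X0 : Matrix (Fin n) (Fin L) ℂ
  W : Matrix (Fin n) (Fin (p+2) × Fin L) ℂ
  S0 : Matrix (Fin L) (Fin L) ℂ
  Hbar : Matrix (Fin (p+2) × Fin L) (Fin (p+1) × Fin L) ℂ
  hL : 1 ≤ L
  hn : (p+2) * L ≤ n
  F0_rank : (B - A * X0).rank = L
  orth : Wᴴ * W = 1
  S0_ut : utL S0
  S0_inv : IsUnit S0
  F0_eq : B - A * X0 = (W.submatrix id fun c : Fin L => ((0 : Fin (p+2)), c)) * S0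
  span : ∀ i : ℕ, i ≤ p + 2 →
    blockKrylov A (B - A * X0) i =
      Submodule.span ℂ { v | ∃ c : Fin (p+2) × Fin L, (c.1 : ℕ) < i ∧ v = fun r => W r c }
  arnoldi : A * W.submatrix id (Prod.map Fin.castSucc id) = W * Hbar
  hess : ∀ r c, (c.1 : ℕ) + 1 < (r.1 : ℕ) → Hbar r c = 0
  sub_ut : ∀ (k : Fin (p+1)) (a b : Fin L), (b : ℕ) < (a : ℕ) → Hbar (k.succ, a) (k, b) = 0
  sub_inv : ∀ k : Fin (p+1), IsUnit (Matrix.of fun a b : Fin L => Hbar (k.succ, a) (k, b))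

namespace BlockArnoldi

variable {n L p : ℕ}

/-- `H̄_{j-1}`, the leading `jL × (j-1)L` submatrix of `H̄_j`. -/
def Hprev (D : BlockArnoldi n L p) : Matrix (Fin (p+1) × Fin L) (Fin p × Fin L) ℂ :=
  D.Hbar.submatrix (Prod.map Fin.castSucc id) (Prod.map Fin.castSucc id)

/-- `H_j`, the leading `jL × jL` submatrix of `H̄_j`. -/
def Hsq (D : BlockArnoldi n L p) : Matrix (Fin (p+1) × Fin L) (Fin (p+1) × Fin L) ℂ :=
  D.Hbar.submatrix (Prod.map Fin.castSucc id) id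

/-- `W_j = [V₁ … V_j]`. -/
def Wfull (D : BlockArnoldi n L p) : Matrix (Fin n) (Fin (p+1) × Fin L) ℂ :=
  D.W.submatrix id (Prod.map Fin.castSucc id)

/-- `W_{j-1} = [V₁ … V_{j-1}]`. -/
def Wprev (D : BlockArnoldi n L p) : Matrix (Fin n) (Fin p × Fin L) ℂ :=
  D.W.submatrix id (Prod.map (fun i : Fin p => (i.castSucc.castSucc : Fin (p+2))) id)

/-- `V_j`, the `j`-th block Arnoldi vector. -/
def Vj (D : BlockArnoldi n L p) : Matrix (Fin n) (Fin L) ℂ :=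
  D.W.submatrix id fun c : Fin L => (((Fin.last p).castSucc : Fin (p+2)), c)

end BlockArnoldi

/-- `Y` is the unique minimizer of `‖Hb • Y' - T‖_F` over all `Y'`. -/
def IsUniqueFrobMin {a b c : Type*} [Fintype a] [Fintype b] [Fintype c]
    (Hb : Matrix a b ℂ) (T : Matrix a c ℂ) (Y : Matrix b c ℂ) : Prop :=
  (∀ Y', frobSq (Hb * Y - T) ≤ frobSq (Hb * Y' - T)) ∧
  ∀ Y', (∀ Y'', frobSq (Hb * Y' - T) ≤ frobSq (Hb * Y'' - T)) → Y' = Y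

/-- `Y_j^{(G)}` is the solution of the `j`-th block GMRES least-squares subproblem. -/
def IsBlockGMRESj {n L p : ℕ} (D : BlockArnoldi n L p)
    (Y : Matrix (Fin (p+1) × Fin L) (Fin L) ℂ) : Prop :=
  IsUniqueFrobMin D.Hbar (EL (p+2) L * D.S0) Y

/-- `Y_{j-1}^{(G)}` is the solution of the `(j-1)`-st block GMRES least-squares
subproblem. -/
def IsBlockGMRESprev {n L p : ℕ} (D : BlockArnoldi n L p)
    (Y : Matrix (Fin p × Fin L) (Fin L) ℂ) : Prop :=
  IsUniqueFrobMin D.Hprev (EL (p+1) L * D.S0) Y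

/-- The QR setup at step `j = p+1` : a QR factorization `Q̄_{j-1} H̄_{j-1} = [R_{j-1}; 0]`
from the previous step, the induced splitting
`diag(Q̄_{j-1}, I_L)·H̄_j = [[R,Z],[0,Ĥ_{jj}],[0,H_{j+1,j}]]`, the unitary `Q_j`
(identity outside its trailing principal `2L×2L` block) completing the
QR factorization of `H̄_j`, and the unitary `Q̂_j^{(b)}` triangularizing `Ĥ_{jj}`. -/
structure QRSetup (L p : ℕ) (Hbar : Matrix (Fin (p+2) × Fin L) (Fin (p+1) × Fin L) ℂ)
    (S0 : Matrix (Fin L) (Fin L) ℂ) : Type where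
  Qbar : Matrix (Fin (p+1) × Fin L) (Fin (p+1) × Fin L) ℂ
  R : Matrix (Fin p × Fin L) (Fin p × Fin L) ℂ
  Z : Matrix (Fin p × Fin L) (Fin L) ℂ
  Hhat : Matrix (Fin L) (Fin L) ℂ
  Hsub : Matrix (Fin L) (Fin L) ℂ
  Q11 : Matrix (Fin L) (Fin L) ℂ
  Q12 : Matrix (Fin L) (Fin L) ℂ
  Q21 : Matrix (Fin L) (Fin L) ℂ
  Q22 : Matrix (Fin L) (Fin L) ℂ
  N : Matrix (Fin L) (Fin L) ℂ
  Qhatb : Matrix (Fin L) (Fin L) ℂ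
  Nhat : Matrix (Fin L) (Fin L) ℂ
  Qbar_unit : Qbarᴴ * Qbar = 1
  Qbar_base : p = 0 → Qbar = 1
  R_ut : utBig R
  R_inv : IsUnit R
  qr_prev : Qbar * Hbar.submatrix (Prod.map Fin.castSucc id) (Prod.map Fin.castSucc id)
      = stackZero R
  qr_split : extendOne Qbar * Hbar = threeBlock R Z Hhat Hsub
  Qj_unit : (trailingTwo (m := p) Q11 Q12 Q21 Q22)ᴴ * trailingTwo (m := p) Q11 Q12 Q21 Q22 = 1
  qr_full : trailingTwo (m := p) Q11 Q12 Q21 Q22 * (extendOne Qbar * Hbar)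
      = threeBlock R Z N 0
  N_ut : utL N
  N_inv : IsUnit N
  Qhatb_unit : Qhatbᴴ * Qhatb = 1
  Nhat_def : Nhat = Qhatb * Hhat
  Nhat_ut : utL Nhat

namespace QRSetup

variable {L p : ℕ} {Hbar : Matrix (Fin (p+2) × Fin L) (Fin (p+1) × Fin L) ℂ}
  {S0 : Matrix (Fin L) (Fin L) ℂ}

/-- `C̃_j` : the last `L` rows of `Q̄_{j-1} E_L^{[jL]} S₀`. -/
def Ct (S : QRSetup L p Hbar S0) : Matrix (Fin L) (Fin L) ℂ :=
  Matrix.of fun a b => (S.Qbar * (EL (p+1) L * S0)) ((Fin.last p), a) b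

/-- `C_j := Q_j^{(11)} C̃_j`. -/
def C (S : QRSetup L p Hbar S0) : Matrix (Fin L) (Fin L) ℂ := S.Q11 * S.Ct

/-- `Ĉ_j := Q̂_j^{(b)} C̃_j`. -/
def Chat (S : QRSetup L p Hbar S0) : Matrix (Fin L) (Fin L) ℂ := S.Qhatb * S.Ct

end QRSetup

/-- Column space of a matrix: the span of its columns. -/
def colSpace {n : ℕ} {c : Type*} [Fintype c] (M : Matrix (Fin n) c ℂ) :
    Submodule ℂ (Fin n → ℂ) :=
  Submodule.span ℂ (Set.range fun j => fun r => M r j)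

/-- The multiset of singular values of `M` (square roots of the eigenvalues of
`M Mᴴ`, one value for each row index). -/
noncomputable def svalsMultiset {a b : Type*} [Fintype a] [Fintype b] [DecidableEq a]
    (M : Matrix a b ℂ) : Multiset ℝ :=
  (Finset.univ.val : Multiset a).map
    fun i => Real.sqrt ((Matrix.isHermitian_mul_conjTranspose_self M).eigenvalues i)

/-- The nested family of accumulated unitary factors:
`Q̄₀ = I` and `Q̄_i = Q_i · diag(Q̄_{i-1}, I_L)`, where `Q_i` is the identity outside
its trailing `2L × 2L` block `[[Q11 i, Q12 i], [Q21 i, Q22 i]]`. -/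
def QbarFam {L : ℕ} (Q11f Q12f Q21f Q22f : ℕ → Matrix (Fin L) (Fin L) ℂ) :
    (i : ℕ) → Matrix (Fin (i+1) × Fin L) (Fin (i+1) × Fin L) ℂ
  | 0 => 1
  | i+1 => trailingTwo (m := i) (Q11f (i+1)) (Q12f (i+1)) (Q21f (i+1)) (Q22f (i+1)) *
      extendOne (QbarFam Q11f Q12f Q21f Q22f i)

/-- The product `Qf i * Qf (i-1) * ⋯ * Qf 1`. -/
def prodFam {L : ℕ} (Qf : ℕ → Matrix (Fin L) (Fin L) ℂ) : ℕ → Matrix (Fin L) (Fin L) ℂ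
  | 0 => 1
  | i+1 => Qf (i+1) * prodFam Qf i

/-- `H̄_i`, the leading `(i+1)L × iL` submatrix of `H̄_j`. -/
def BlockArnoldi.Hlead {n L p : ℕ} (D : BlockArnoldi n L p) (i : ℕ) (h : i ≤ p + 1) :
    Matrix (Fin (i+1) × Fin L) (Fin i × Fin L) ℂ :=
  D.Hbar.submatrix (Prod.map (Fin.castLE (by omega)) id) (Prod.map (Fin.castLE (by omega)) id)


set_option linter.unusedSectionVars false

namespace Stmt19Aux
open Polynomial


lemma det_smul_one_sub_comm {m : Type*} [Fintype m] [DecidableEq m]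
    {K : Type*} [Field K] (x : K) (hx : x ≠ 0) (C D : Matrix m m K) :
    ((x • 1 : Matrix m m K) - C * D).det = ((x • 1 : Matrix m m K) - D * C).det := by
  have h1 : (x • 1 : Matrix m m K) - C * D = x • ((1 : Matrix m m K) - (x⁻¹ • C) * D) := by
    rw [smul_sub, Matrix.smul_mul, smul_smul, mul_inv_cancel₀ hx, one_smul]
  have h2 : (x • 1 : Matrix m m K) - D * C = x • ((1 : Matrix m m K) - D * (x⁻¹ • C)) := by
    rw [smul_sub, Matrix.mul_smul, smul_smul, mul_inv_cancel₀ hx, one_smul]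
  rw [h1, h2, Matrix.det_smul, Matrix.det_smul, Matrix.det_one_sub_mul_comm]

lemma charpoly_map_frac {m : Type*} [Fintype m] [DecidableEq m] (A : Matrix m m ℂ) :
    algebraMap (Polynomial ℂ) (FractionRing (Polynomial ℂ)) A.charpoly
      = (((algebraMap (Polynomial ℂ) (FractionRing (Polynomial ℂ))) X)
          • (1 : Matrix m m (FractionRing (Polynomial ℂ)))
        - A.map (fun a => algebraMap (Polynomial ℂ) (FractionRing (Polynomial ℂ)) (C a))).det := by
  set φ := algebraMap (Polynomial ℂ) (FractionRing (Polynomial ℂ))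
  rw [Matrix.charpoly, RingHom.map_det]
  congr 1
  ext i j
  by_cases h : i = j
  · subst h
    simp [RingHom.mapMatrix_apply, Matrix.map_apply, Matrix.sub_apply, Matrix.smul_apply,
      Matrix.one_apply_eq, map_sub, smul_eq_mul, mul_one]
  · simp [RingHom.mapMatrix_apply, Matrix.map_apply, h, Matrix.sub_apply, Matrix.smul_apply,
      Matrix.one_apply_ne h, smul_eq_mul, mul_zero]

lemma charpoly_mul_comm {m : Type*} [Fintype m] [DecidableEq m] (A B : Matrix m m ℂ) :
    (A * B).charpoly = (B * A).charpoly := by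
  set φ := algebraMap (Polynomial ℂ) (FractionRing (Polynomial ℂ))
  have hinj : Function.Injective φ := IsFractionRing.injective _ _
  apply hinj
  rw [charpoly_map_frac, charpoly_map_frac]
  have hmap : ∀ M N : Matrix m m ℂ, (M * N).map (fun a => φ (C a))
      = M.map (fun a => φ (C a)) * N.map (fun a => φ (C a)) := by
    intro M N
    exact Matrix.map_mul (f := φ.comp Polynomial.C)
  rw [hmap, hmap]
  exact det_smul_one_sub_comm (φ X) (fun h => Polynomial.X_ne_zero (hinj (h.trans (map_zero φ).symm))) _ _

lemma charpoly_diagonal_ofReal {m : Type*} [Fintype m] [DecidableEq m] (d : m → ℝ) :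
    (Matrix.diagonal (fun i => (d i : ℂ))).charpoly
      = (((Finset.univ.val : Multiset m).map (fun i => ((d i : ℂ)))).map
          (fun a => X - C a)).prod := by
  rw [Matrix.charpoly]
  have : charmatrix (Matrix.diagonal (fun i => (d i : ℂ)))
      = Matrix.diagonal (fun i => (X : ℂ[X]) - C (d i : ℂ)) := by
    ext i j
    by_cases h : i = j
    · subst h; simp
    · simp [h, Matrix.diagonal_apply_ne _ h]
  rw [this, Matrix.det_diagonal, Multiset.map_map, Finset.prod_eq_multiset_prod]
  rfl

lemma charpoly_hermitian {m : Type*} [Fintype m] [DecidableEq m] {A : Matrix m m ℂ}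
    (hA : A.IsHermitian) :
    A.charpoly = (((Finset.univ.val : Multiset m).map
        (fun i => ((hA.eigenvalues i : ℂ)))).map (fun a => X - C a)).prod := by
  have hsp := hA.spectral_theorem
  have hu : (star (hA.eigenvectorUnitary : Matrix m m ℂ)) * (hA.eigenvectorUnitary : Matrix m m ℂ)
      = 1 := by
    exact Matrix.mem_unitaryGroup_iff'.mp hA.eigenvectorUnitary.2
  calc A.charpoly
      = ((hA.eigenvectorUnitary : Matrix m m ℂ) * (Matrix.diagonal (RCLike.ofReal ∘ hA.eigenvalues))
        * (star (hA.eigenvectorUnitary : Matrix m m ℂ))).charpoly := by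
          conv_lhs => rw [hsp, Unitary.conjStarAlgAut_apply]
    _ = ((star (hA.eigenvectorUnitary : Matrix m m ℂ)) * ((hA.eigenvectorUnitary : Matrix m m ℂ)
        * (Matrix.diagonal (RCLike.ofReal ∘ hA.eigenvalues)))).charpoly := by
          rw [charpoly_mul_comm]
    _ = (Matrix.diagonal (fun i => ((hA.eigenvalues i : ℂ)))).charpoly := by
          rw [← Matrix.mul_assoc, hu, Matrix.one_mul]; rfl
    _ = _ := charpoly_diagonal_ofReal _

lemma eig_multiset_eq_of_charpoly {m : Type*} [Fintype m] [DecidableEq m]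
    {A B : Matrix m m ℂ} (hA : A.IsHermitian) (hB : B.IsHermitian)
    (h : A.charpoly = B.charpoly) :
    (Finset.univ.val : Multiset m).map hA.eigenvalues
      = (Finset.univ.val : Multiset m).map hB.eigenvalues := by
  have h2 := (charpoly_hermitian hA).symm.trans (h.trans (charpoly_hermitian hB))
  have h3 := congrArg Polynomial.roots h2
  rw [Polynomial.roots_multiset_prod_X_sub_C, Polynomial.roots_multiset_prod_X_sub_C] at h3
  have h4 : ((Finset.univ.val : Multiset m).map hA.eigenvalues).map (fun r : ℝ => (r : ℂ))
      = ((Finset.univ.val : Multiset m).map hB.eigenvalues).map (fun r : ℝ => (r : ℂ)) := by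
    rw [Multiset.map_map, Multiset.map_map]; exact h3
  exact Multiset.map_injective Complex.ofReal_injective h4

lemma svals_eq_of_charpoly {b1 b2 : Type*} [Fintype b1] [Fintype b2] {L : ℕ}
    (M1 : Matrix (Fin L) b1 ℂ) (M2 : Matrix (Fin L) b2 ℂ)
    (h : (M1 * M1ᴴ).charpoly = (M2 * M2ᴴ).charpoly) :
    svalsMultiset M1 = svalsMultiset M2 := by
  unfold svalsMultiset
  have h1 := eig_multiset_eq_of_charpoly (Matrix.isHermitian_mul_conjTranspose_self M1)
    (Matrix.isHermitian_mul_conjTranspose_self M2) h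
  have e1 : ((Finset.univ.val : Multiset (Fin L)).map
      fun i => Real.sqrt ((Matrix.isHermitian_mul_conjTranspose_self M1).eigenvalues i))
      = ((Finset.univ.val : Multiset (Fin L)).map
          (Matrix.isHermitian_mul_conjTranspose_self M1).eigenvalues).map Real.sqrt := by
    rw [Multiset.map_map]; rfl
  have e2 : ((Finset.univ.val : Multiset (Fin L)).map
      fun i => Real.sqrt ((Matrix.isHermitian_mul_conjTranspose_self M2).eigenvalues i))
      = ((Finset.univ.val : Multiset (Fin L)).map
          (Matrix.isHermitian_mul_conjTranspose_self M2).eigenvalues).map Real.sqrt := by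
    rw [Multiset.map_map]; rfl
  rw [e1, e2, h1]


section Blocks
variable {m L : ℕ} {col : Type*} [Fintype col]


variable {m L : ℕ} {col : Type*} [Fintype col]

/-- embedding of the first `m` block rows -/
def emb (m L : ℕ) : Fin m × Fin L → Fin (m+1) × Fin L := fun k => (k.1.castSucc, k.2)

lemma sum_split {β : Type*} [AddCommMonoid β] (f : Fin (m+1) × Fin L → β) :
    ∑ k : Fin (m+1) × Fin L, f k
      = (∑ k : Fin m × Fin L, f (k.1.castSucc, k.2)) + ∑ l : Fin L, f (Fin.last m, l) := by
  rw [Fintype.sum_prod_type, Fintype.sum_prod_type, Fin.sum_univ_castSucc]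

@[simp] lemma emb_val (k : Fin m × Fin L) : ((emb m L k).1 : ℕ) = (k.1 : ℕ) := rfl

lemma last_of_not_lt {r : Fin (m+1)} (h : ¬ ((r : ℕ) < m)) : r = Fin.last m :=
  Fin.ext (by have := r.isLt; simp only [Fin.val_last]; omega)

-- vcat lemmas
lemma vcat_emb (T : Matrix (Fin m × Fin L) col ℂ) (Bo : Matrix (Fin L) col ℂ)
    (k : Fin m × Fin L) (c : col) : vcat T Bo (k.1.castSucc, k.2) c = T k c := by
  have h : ((k.1.castSucc : Fin (m+1)) : ℕ) < m := k.1.isLt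
  simp only [vcat, Matrix.of_apply, dif_pos h]
  have : (⟨((k.1.castSucc : Fin (m+1)) : ℕ), h⟩ : Fin m) = k.1 := by ext; simp
  rw [this]

lemma vcat_last (T : Matrix (Fin m × Fin L) col ℂ) (Bo : Matrix (Fin L) col ℂ)
    (l : Fin L) (c : col) : vcat T Bo (Fin.last m, l) c = Bo l c := by
  simp [vcat]

lemma vcat_mul {col2 : Type*} [Fintype col2] (T : Matrix (Fin m × Fin L) col ℂ)
    (Bo : Matrix (Fin L) col ℂ) (C : Matrix col col2 ℂ) :
    vcat T Bo * C = vcat (T * C) (Bo * C) := by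
  ext r c
  by_cases h : (r.1 : ℕ) < m <;>
    simp [vcat, Matrix.mul_apply, h]

lemma vcat_sub (T T' : Matrix (Fin m × Fin L) col ℂ) (Bo Bo' : Matrix (Fin L) col ℂ) :
    vcat T Bo - vcat T' Bo' = vcat (T - T') (Bo - Bo') := by
  ext r c
  by_cases h : (r.1 : ℕ) < m <;> simp [vcat, h]

lemma vcatCT_mul_vcat {col2 : Type*} [Fintype col2]
    (T : Matrix (Fin m × Fin L) col ℂ) (Bo : Matrix (Fin L) col ℂ)
    (T' : Matrix (Fin m × Fin L) col2 ℂ) (Bo' : Matrix (Fin L) col2 ℂ) :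
    (vcat T Bo)ᴴ * vcat T' Bo' = Tᴴ * T' + Boᴴ * Bo' := by
  ext a c
  rw [Matrix.mul_apply, sum_split (f := fun k => (vcat T Bo)ᴴ a k * vcat T' Bo' k c)]
  simp [Matrix.conjTranspose_apply, vcat_emb, vcat_last, Matrix.mul_apply, Matrix.add_apply]

-- stackZero lemmas
lemma stackZero_emb (R : Matrix (Fin m × Fin L) (Fin m × Fin L) ℂ) (k : Fin m × Fin L)
    (c : Fin m × Fin L) : stackZero R (k.1.castSucc, k.2) c = R k c := by
  have h : ((k.1.castSucc : Fin (m+1)) : ℕ) < m := k.1.isLt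
  simp only [stackZero, Matrix.of_apply, dif_pos h]
  have : (⟨((k.1.castSucc : Fin (m+1)) : ℕ), h⟩ : Fin m) = k.1 := by ext; simp
  rw [this]

lemma stackZero_last (R : Matrix (Fin m × Fin L) (Fin m × Fin L) ℂ) (l : Fin L)
    (c : Fin m × Fin L) : stackZero R (Fin.last m, l) c = 0 := by
  simp [stackZero]

lemma stackZero_mul (R C : Matrix (Fin m × Fin L) (Fin m × Fin L) ℂ) :
    stackZero R * C = stackZero (R * C) := by
  ext r c
  by_cases h : (r.1 : ℕ) < m <;> simp [stackZero, Matrix.mul_apply, h]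

lemma stackZeroCT_mul_stackZero (A B : Matrix (Fin m × Fin L) (Fin m × Fin L) ℂ) :
    (stackZero A)ᴴ * stackZero B = Aᴴ * B := by
  ext a c
  rw [Matrix.mul_apply, sum_split (f := fun k => (stackZero A)ᴴ a k * stackZero B k c)]
  simp [Matrix.conjTranspose_apply, stackZero_emb, stackZero_last, Matrix.mul_apply]


-- extendOne lemmas
lemma extendOne_emb_emb (Q : Matrix (Fin m × Fin L) (Fin m × Fin L) ℂ) (r c : Fin m × Fin L) :
    extendOne Q (r.1.castSucc, r.2) (c.1.castSucc, c.2) = Q r c := by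
  have hr : ((r.1.castSucc : Fin (m+1)) : ℕ) < m := r.1.isLt
  have hc : ((c.1.castSucc : Fin (m+1)) : ℕ) < m := c.1.isLt
  simp only [extendOne, Matrix.of_apply, dif_pos hr, dif_pos hc]
  have h1 : (⟨((r.1.castSucc : Fin (m+1)) : ℕ), hr⟩ : Fin m) = r.1 := by ext; simp
  have h2 : (⟨((c.1.castSucc : Fin (m+1)) : ℕ), hc⟩ : Fin m) = c.1 := by ext; simp
  rw [h1, h2]

lemma extendOne_emb_last (Q : Matrix (Fin m × Fin L) (Fin m × Fin L) ℂ) (r : Fin m × Fin L)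
    (l : Fin L) : extendOne Q (r.1.castSucc, r.2) (Fin.last m, l) = 0 := by
  have hr : ((r.1.castSucc : Fin (m+1)) : ℕ) < m := r.1.isLt
  simp [extendOne, dif_pos hr]

lemma extendOne_last_emb (Q : Matrix (Fin m × Fin L) (Fin m × Fin L) ℂ) (l : Fin L)
    (c : Fin m × Fin L) : extendOne Q (Fin.last m, l) (c.1.castSucc, c.2) = 0 := by
  have hc : ((c.1.castSucc : Fin (m+1)) : ℕ) < m := c.1.isLt
  simp [extendOne, hc]

lemma extendOne_last_last (Q : Matrix (Fin m × Fin L) (Fin m × Fin L) ℂ) (l l' : Fin L) :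
    extendOne Q (Fin.last m, l) (Fin.last m, l') = if l = l' then 1 else 0 := by
  simp [extendOne]

lemma matrix_ext_block {c : Type*} (M N : Matrix (Fin (m+1) × Fin L) c ℂ)
    (h1 : ∀ (k : Fin m × Fin L) (j : c), M (k.1.castSucc, k.2) j = N (k.1.castSucc, k.2) j)
    (h2 : ∀ (l : Fin L) (j : c), M (Fin.last m, l) j = N (Fin.last m, l) j) : M = N := by
  ext r j
  by_cases h : (r.1 : ℕ) < m
  · have : r = ((⟨(r.1 : ℕ), h⟩ : Fin m).castSucc, r.2) := by
      refine Prod.ext ?_ rfl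
      ext; simp
    rw [this]; exact h1 (⟨(r.1 : ℕ), h⟩, r.2) j
  · have : r = (Fin.last m, r.2) := by
      refine Prod.ext (last_of_not_lt h) rfl
    rw [this]; exact h2 _ _

lemma block_cases (r : Fin (m+1) × Fin L) :
    (∃ k : Fin m × Fin L, r = (k.1.castSucc, k.2)) ∨ ∃ l : Fin L, r = (Fin.last m, l) := by
  by_cases h : (r.1 : ℕ) < m
  · exact Or.inl ⟨(⟨(r.1 : ℕ), h⟩, r.2), Prod.ext (by ext; simp) rfl⟩
  · exact Or.inr ⟨r.2, Prod.ext (last_of_not_lt h) rfl⟩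

lemma extendOne_conjTranspose (Q : Matrix (Fin m × Fin L) (Fin m × Fin L) ℂ) :
    (extendOne Q)ᴴ = extendOne (Qᴴ) := by
  ext r c
  rcases block_cases r with ⟨k, rfl⟩ | ⟨l, rfl⟩ <;> rcases block_cases c with ⟨k', rfl⟩ | ⟨l', rfl⟩ <;>
    simp [Matrix.conjTranspose_apply, extendOne_emb_emb, extendOne_emb_last,
      extendOne_last_emb, extendOne_last_last, eq_comm]

lemma extendOne_mul (A B : Matrix (Fin m × Fin L) (Fin m × Fin L) ℂ) :
    extendOne A * extendOne B = extendOne (A * B) := by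
  ext r c
  rw [Matrix.mul_apply, sum_split (f := fun k => extendOne A r k * extendOne B k c)]
  rcases block_cases r with ⟨k, rfl⟩ | ⟨l, rfl⟩ <;> rcases block_cases c with ⟨k', rfl⟩ | ⟨l', rfl⟩ <;>
    simp [extendOne_emb_emb, extendOne_emb_last, extendOne_last_emb, extendOne_last_last,
      Matrix.mul_apply, Finset.sum_ite_eq]

lemma extendOne_one : extendOne (1 : Matrix (Fin m × Fin L) (Fin m × Fin L) ℂ) = 1 := by
  ext r c
  rcases block_cases r with ⟨k, rfl⟩ | ⟨l, rfl⟩ <;> rcases block_cases c with ⟨k', rfl⟩ | ⟨l', rfl⟩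
  · rw [extendOne_emb_emb]
    by_cases h : k = k'
    · simp [h, Matrix.one_apply]
    · rw [Matrix.one_apply_ne h, Matrix.one_apply_ne]
      intro hc
      apply h
      obtain ⟨h1, h2⟩ := Prod.mk.injEq .. ▸ hc
      exact Prod.ext (Fin.castSucc_injective _ h1) h2
  · rw [extendOne_emb_last, Matrix.one_apply_ne]
    intro hc
    have := congrArg (fun x => ((x.1 : Fin (m+1)) : ℕ)) hc
    simp at this
    omega
  · rw [extendOne_last_emb, Matrix.one_apply_ne]
    intro hc
    have := congrArg (fun x => ((x.1 : Fin (m+1)) : ℕ)) hc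
    simp at this
    have := k'.1.isLt
    omega
  · rw [extendOne_last_last, Matrix.one_apply]
    by_cases h : l = l'
    · simp [h]
    · simp [h, Prod.ext_iff]

lemma extendOne_mul_vcat {c : Type*} [Fintype c] (A : Matrix (Fin m × Fin L) (Fin m × Fin L) ℂ)
    (X : Matrix (Fin m × Fin L) c ℂ) (Bo : Matrix (Fin L) c ℂ) :
    extendOne A * vcat X Bo = vcat (A * X) Bo := by
  apply matrix_ext_block
  · intro k j
    rw [vcat_emb, Matrix.mul_apply,
      sum_split (f := fun k' => extendOne A (k.1.castSucc, k.2) k' * vcat X Bo k' j)]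
    simp [extendOne_emb_emb, extendOne_emb_last, vcat_emb, Matrix.mul_apply]
  · intro l j
    rw [vcat_last, Matrix.mul_apply,
      sum_split (f := fun k' => extendOne A (Fin.last m, l) k' * vcat X Bo k' j)]
    simp [extendOne_last_emb, extendOne_last_last, vcat_last, Finset.sum_ite_eq]


lemma stackZero_mul_emb {c : Type*} [Fintype c] (Rm : Matrix (Fin m × Fin L) (Fin m × Fin L) ℂ)
    (Y : Matrix (Fin m × Fin L) c ℂ) (k : Fin m × Fin L) (j : c) :
    (stackZero Rm * Y) (k.1.castSucc, k.2) j = (Rm * Y) k j := by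
  rw [Matrix.mul_apply, Matrix.mul_apply]
  exact Finset.sum_congr rfl fun x _ => by rw [stackZero_emb]

lemma stackZero_mul_last {c : Type*} [Fintype c] (Rm : Matrix (Fin m × Fin L) (Fin m × Fin L) ℂ)
    (Y : Matrix (Fin m × Fin L) c ℂ) (l : Fin L) (j : c) :
    (stackZero Rm * Y) (Fin.last m, l) j = 0 := by
  rw [Matrix.mul_apply]
  exact Finset.sum_eq_zero fun x _ => by rw [stackZero_last, zero_mul]

-- frobSq lemmas
lemma frobSq_nonneg {a b : Type*} [Fintype a] [Fintype b] (M : Matrix a b ℂ) : 0 ≤ frobSq M :=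
  Finset.sum_nonneg fun r _ => Finset.sum_nonneg fun c _ => Complex.normSq_nonneg _

lemma frobSq_zero {a b : Type*} [Fintype a] [Fintype b] :
    frobSq (0 : Matrix a b ℂ) = 0 := by simp [frobSq]

lemma frobSq_neg {a b : Type*} [Fintype a] [Fintype b] (M : Matrix a b ℂ) :
    frobSq (-M) = frobSq M := by simp [frobSq]

lemma eq_zero_of_frobSq_nonpos {a b : Type*} [Fintype a] [Fintype b] {M : Matrix a b ℂ}
    (h : frobSq M ≤ 0) : M = 0 := by
  have h0 : frobSq M = 0 := le_antisymm h (frobSq_nonneg M)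
  ext r c
  have h1 : ∀ r' ∈ Finset.univ, (0:ℝ) ≤ ∑ c', Complex.normSq (M r' c') :=
    fun r' _ => Finset.sum_nonneg fun c' _ => Complex.normSq_nonneg _
  have h2 := (Finset.sum_eq_zero_iff_of_nonneg h1).mp h0 r (Finset.mem_univ r)
  have h3 := (Finset.sum_eq_zero_iff_of_nonneg
    (fun c' _ => Complex.normSq_nonneg (M r c'))).mp h2 c (Finset.mem_univ c)
  simpa using Complex.normSq_eq_zero.mp h3

lemma frobSq_eq_sum_diag {a b : Type*} [Fintype a] [Fintype b] (M : Matrix a b ℂ) :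
    frobSq M = ∑ c, ((Mᴴ * M) c c).re := by
  rw [frobSq, Finset.sum_comm]
  refine Finset.sum_congr rfl fun c _ => ?_
  rw [Matrix.mul_apply, Complex.re_sum]
  refine Finset.sum_congr rfl fun r _ => ?_
  rw [Matrix.conjTranspose_apply, Complex.normSq_apply]
  simp only [Complex.mul_re, RCLike.star_def, Complex.conj_re, Complex.conj_im]
  ring

lemma frobSq_unitary {a b : Type*} [Fintype a] [Fintype b] [DecidableEq a] (Q : Matrix a a ℂ)
    (hQ : Qᴴ * Q = 1) (M : Matrix a b ℂ) : frobSq (Q * M) = frobSq M := by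
  rw [frobSq_eq_sum_diag, frobSq_eq_sum_diag]
  have : (Q * M)ᴴ * (Q * M) = Mᴴ * M := by
    rw [Matrix.conjTranspose_mul, Matrix.mul_assoc, ← Matrix.mul_assoc Qᴴ, hQ,
      Matrix.one_mul]
  rw [this]

lemma frobSq_split {c : Type*} [Fintype c] (M : Matrix (Fin (m+1) × Fin L) c ℂ) :
    frobSq M = frobSq (M.submatrix (fun k : Fin m × Fin L => (k.1.castSucc, k.2)) id)
      + frobSq (M.submatrix (fun l : Fin L => ((Fin.last m, l) : Fin (m+1) × Fin L)) id) := by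
  rw [frobSq, sum_split (f := fun r => ∑ c, Complex.normSq (M r c))]
  rfl

-- the key minimization lemma
lemma key_min (Q : Matrix (Fin (m+1) × Fin L) (Fin (m+1) × Fin L) ℂ)
    (hQ : Qᴴ * Q = 1)
    (Hp : Matrix (Fin (m+1) × Fin L) (Fin m × Fin L) ℂ)
    (Rm : Matrix (Fin m × Fin L) (Fin m × Fin L) ℂ)
    (hqr : Q * Hp = stackZero Rm) (hR : IsUnit Rm)
    (T : Matrix (Fin (m+1) × Fin L) (Fin L) ℂ)
    (Y : Matrix (Fin m × Fin L) (Fin L) ℂ)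
    (hmin : ∀ Y' : Matrix (Fin m × Fin L) (Fin L) ℂ, frobSq (Hp * Y - T) ≤ frobSq (Hp * Y' - T)) :
    (Q * (Hp * Y - T)).submatrix (fun k : Fin m × Fin L => (k.1.castSucc, k.2)) id = 0 := by
  have hRdet : IsUnit Rm.det := (Matrix.isUnit_iff_isUnit_det _).mp hR
  have hQHp : ∀ Y' : Matrix (Fin m × Fin L) (Fin L) ℂ,
      Q * (Hp * Y' - T) = stackZero Rm * Y' - Q * T := by
    intro Y'
    rw [Matrix.mul_sub, ← Matrix.mul_assoc, hqr]
  have htop : ∀ Y' : Matrix (Fin m × Fin L) (Fin L) ℂ,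
      (Q * (Hp * Y' - T)).submatrix (fun k : Fin m × Fin L => (k.1.castSucc, k.2)) id
        = Rm * Y' - (Q * T).submatrix (fun k : Fin m × Fin L => (k.1.castSucc, k.2)) id := by
    intro Y'
    rw [hQHp]
    ext k c
    simp only [Matrix.submatrix_apply, Matrix.sub_apply, id_eq]
    rw [stackZero_mul_emb]
  have hbot : ∀ Y' : Matrix (Fin m × Fin L) (Fin L) ℂ,
      (Q * (Hp * Y' - T)).submatrix (fun l : Fin L => ((Fin.last m, l) : Fin (m+1) × Fin L)) id
        = -((Q * T).submatrix (fun l : Fin L => ((Fin.last m, l) : Fin (m+1) × Fin L)) id) := by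
    intro Y'
    rw [hQHp]
    ext l c
    simp only [Matrix.submatrix_apply, Matrix.sub_apply, Matrix.neg_apply, id_eq]
    rw [stackZero_mul_last, zero_sub]
  have hval : ∀ Y' : Matrix (Fin m × Fin L) (Fin L) ℂ,
      frobSq (Hp * Y' - T)
        = frobSq (Rm * Y' - (Q * T).submatrix (fun k : Fin m × Fin L => (k.1.castSucc, k.2)) id)
          + frobSq ((Q * T).submatrix (fun l : Fin L => ((Fin.last m, l) : Fin (m+1) × Fin L)) id) := by
    intro Y'
    rw [← frobSq_unitary Q hQ, frobSq_split, htop, hbot, frobSq_neg]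
  set Y0 := Rm⁻¹ * (Q * T).submatrix (fun k : Fin m × Fin L => (k.1.castSucc, k.2)) id with hY0
  have hzero : Rm * Y0 - (Q * T).submatrix (fun k : Fin m × Fin L => (k.1.castSucc, k.2)) id = 0 := by
    rw [hY0, ← Matrix.mul_assoc, Matrix.mul_nonsing_inv _ hRdet, Matrix.one_mul, sub_self]
  have h1 := hmin Y0
  rw [hval Y, hval Y0, hzero, frobSq_zero, zero_add, add_le_iff_nonpos_left] at h1
  have h2 := eq_zero_of_frobSq_nonpos h1
  rw [htop, h2]

-- colSpace lemmas
lemma colSpace_eq_range {n : ℕ} {c : Type*} [Fintype c] (M : Matrix (Fin n) c ℂ) :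
    colSpace M = LinearMap.range M.mulVecLin := by
  rw [Matrix.range_mulVecLin]
  rfl

lemma colSpace_mul_of_surj {n : ℕ} {c d : Type*} [Fintype c] [Fintype d]
    (M : Matrix (Fin n) c ℂ) (N : Matrix c d ℂ) (h : Function.Surjective N.mulVecLin) :
    colSpace (M * N) = colSpace M := by
  rw [colSpace_eq_range, colSpace_eq_range, Matrix.mulVecLin_mul, LinearMap.range_comp,
    LinearMap.range_eq_top.mpr h, Submodule.map_top]

lemma surj_of_isUnit {c : Type*} [Fintype c] [DecidableEq c] {N : Matrix c c ℂ}
    (h : IsUnit N) : Function.Surjective N.mulVecLin := by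
  intro y
  refine ⟨N⁻¹.mulVec y, ?_⟩
  rw [Matrix.mulVecLin_apply, Matrix.mulVec_mulVec,
    Matrix.mul_nonsing_inv _ ((Matrix.isUnit_iff_isUnit_det _).mp h), Matrix.one_mulVec]

lemma surj_of_rank_eq {k : ℕ} {c : Type*} [Fintype c] (N : Matrix (Fin k) c ℂ)
    (h : N.rank = k) : Function.Surjective N.mulVecLin := by
  rw [← LinearMap.range_eq_top]
  apply Submodule.eq_top_of_finrank_eq
  rw [← Matrix.rank, h, Module.finrank_fintype_fun_eq_card, Fintype.card_fin]

lemma factor_through {n : ℕ} {c d : Type*} [Fintype c] [Fintype d]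
    (P : Matrix (Fin n) c ℂ) (U : Matrix (Fin n) d ℂ) (h : colSpace U ≤ colSpace P) :
    ∃ K : Matrix c d ℂ, U = P * K := by
  have hcol : ∀ j : d, ∃ v : c → ℂ, P.mulVec v = fun r => U r j := by
    intro j
    have hj : (fun r => U r j) ∈ colSpace U := Submodule.subset_span ⟨j, rfl⟩
    have := h hj
    rw [colSpace_eq_range] at this
    obtain ⟨v, hv⟩ := this
    exact ⟨v, hv⟩
  choose v hv using hcol
  refine ⟨Matrix.of fun i j => v j i, ?_⟩
  ext r j
  rw [Matrix.mul_apply]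
  have := congrFun (hv j) r
  rw [Matrix.mulVec, dotProduct] at this
  exact this.symm

-- sel : indicator of the last block row
def sel (m L : ℕ) : Matrix (Fin (m+1) × Fin L) (Fin L) ℂ :=
  Matrix.of fun r b => if r = (Fin.last m, b) then 1 else 0

lemma sel_emb (k : Fin m × Fin L) (b : Fin L) : sel m L (k.1.castSucc, k.2) b = 0 := by
  simp only [sel, Matrix.of_apply, ite_eq_right_iff]
  intro h
  exfalso
  have h1 := congrArg (fun x => ((x.1 : Fin (m+1)) : ℕ)) h
  simp only [Fin.coe_castSucc, Fin.val_last] at h1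
  have := k.1.isLt
  omega

lemma sel_last (l b : Fin L) : sel m L (Fin.last m, l) b = if l = b then 1 else 0 := by
  simp [sel, Prod.ext_iff]

lemma selCT_mul_sel : (sel m L)ᴴ * sel m L = 1 := by
  ext a b
  rw [Matrix.mul_apply, sum_split (f := fun k => (sel m L)ᴴ a k * sel m L k b)]
  simp only [Matrix.conjTranspose_apply, sel_emb, sel_last, map_zero, zero_mul,
    Finset.sum_const_zero, zero_add]
  by_cases h : a = b
  · subst h
    rw [Matrix.one_apply_eq]
    rw [Finset.sum_eq_single a]
    · simp
    · intro l _ hl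
      simp [hl]
    · simp
  · rw [Matrix.one_apply_ne h]
    have hterm : ∀ l : Fin L, star (if l = a then (1:ℂ) else 0) * (if l = b then 1 else 0) = 0 := by
      intro l
      by_cases h1 : l = a
      · subst h1
        simp [h]
      · simp [h1]
    simp [hterm, Ne.symm h]

lemma sel_mul_emb {c : Type*} [Fintype c] (C : Matrix (Fin L) c ℂ) (k : Fin m × Fin L) (j : c) :
    (sel m L * C) (k.1.castSucc, k.2) j = 0 := by
  rw [Matrix.mul_apply]
  exact Finset.sum_eq_zero fun b _ => by rw [sel_emb, zero_mul]

lemma sel_mul_last {c : Type*} [Fintype c] (C : Matrix (Fin L) c ℂ) (l : Fin L) (j : c) :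
    (sel m L * C) (Fin.last m, l) j = C l j := by
  rw [Matrix.mul_apply]
  rw [Finset.sum_congr rfl fun b _ => by rw [sel_last]]
  simp [ite_mul, Finset.sum_ite_eq]

-- EL lemmas
lemma mul_EL {a : Type*} [Fintype a] (Wm : Matrix a (Fin (m+1) × Fin L) ℂ) :
    Wm * EL (m+1) L = Wm.submatrix id (fun c : Fin L => (((0 : Fin (m+1)), c) : Fin (m+1) × Fin L)) := by
  ext r c
  rw [Matrix.mul_apply, Finset.sum_eq_single (((0 : Fin (m+1)), c) : Fin (m+1) × Fin L)]
  · simp [EL]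
  · intro k _ hk
    simp only [EL, Matrix.of_apply]
    rw [if_neg, mul_zero]
    rintro ⟨h1, h2⟩
    exact hk (Prod.ext (Fin.ext (by simpa using h1)) h2)
  · simp

lemma EL_mul_entry (S0 : Matrix (Fin L) (Fin L) ℂ) (i : Fin m) (l c : Fin L) :
    (EL m L * S0) ((i, l)) c = if (i : ℕ) = 0 then S0 l c else 0 := by
  by_cases h : (i : ℕ) = 0
  · rw [if_pos h, Matrix.mul_apply, Finset.sum_eq_single l]
    · simp [EL, h]
    · intro b _ hb; simp [EL, h, Ne.symm hb]
    · simp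
  · rw [if_neg h, Matrix.mul_apply]
    exact Finset.sum_eq_zero fun b _ => by simp [EL, h]

lemma EL_succ_split (S0 : Matrix (Fin L) (Fin L) ℂ) :
    EL (m+2) L * S0 = vcat (EL (m+1) L * S0) (0 : Matrix (Fin L) (Fin L) ℂ) := by
  apply matrix_ext_block
  · intro k j
    rw [vcat_emb]
    rcases k with ⟨k1, k2⟩
    rw [EL_mul_entry, EL_mul_entry]
    rfl
  · intro l j
    rw [vcat_last]
    have : ((Fin.last (m+1), l) : Fin (m+2) × Fin L) = ((Fin.last (m+1) : Fin (m+2)), l) := rfl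
    rw [EL_mul_entry S0 (Fin.last (m+1)) l j]
    simp

lemma vcat_sel_zero (kk : Fin (m+2) × Fin L) (a : Fin L) :
    vcat (sel m L) (0 : Matrix (Fin L) (Fin L) ℂ) kk a
      = if kk = ((⟨m, by omega⟩ : Fin (m+2)), a) then 1 else 0 := by
  rcases block_cases (m := m+1) kk with ⟨k, rfl⟩ | ⟨l, rfl⟩
  · rw [vcat_emb]
    rcases block_cases (m := m) k with ⟨k', rfl⟩ | ⟨l', rfl⟩
    · rw [sel_emb, if_neg]
      intro h
      have h1 := congrArg (fun x => ((x.1 : Fin (m+2)) : ℕ)) h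
      simp only [Fin.coe_castSucc] at h1
      have := k'.1.isLt
      omega
    · rw [sel_last]
      by_cases h : l' = a
      · subst h
        rw [if_pos rfl, if_pos]
        exact Prod.ext (Fin.ext (by simp)) rfl
      · rw [if_neg h, if_neg]
        intro hc
        exact h (congrArg Prod.snd hc)
  · rw [vcat_last, if_neg]
    · rfl
    · intro h
      have h1 := congrArg (fun x => ((x.1 : Fin (m+2)) : ℕ)) h
      simp only [Fin.val_last] at h1
      omega

lemma trailingTwo_col_m (Q11 Q12 Q21 Q22 : Matrix (Fin L) (Fin L) ℂ) (c1 : Fin (m+1))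
    (c2 a : Fin L) :
    trailingTwo (m := m) Q11 Q12 Q21 Q22 (c1.castSucc, c2) ((⟨m, by omega⟩ : Fin (m+2)), a)
      = if (c1 : ℕ) = m then Q11 c2 a else 0 := by
  have hc1 : (c1 : ℕ) < m + 1 := c1.isLt
  by_cases h : (c1 : ℕ) = m
  · rw [if_pos h]
    simp only [trailingTwo, Matrix.of_apply]
    have h1 : ¬ (((c1.castSucc : Fin (m+2)) : ℕ) < m ∨ ((⟨m, by omega⟩ : Fin (m+2)) : ℕ) < m) := by
      simp only [Fin.coe_castSucc, Fin.val_mk]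
      omega
    have h2 : ((c1.castSucc : Fin (m+2)) : ℕ) = m := by
      simp only [Fin.coe_castSucc]
      exact h
    rw [if_neg h1, if_pos h2]
    simp
  · rw [if_neg h]
    simp only [trailingTwo, Matrix.of_apply]
    have h1 : ((c1.castSucc : Fin (m+2)) : ℕ) < m ∨ ((⟨m, by omega⟩ : Fin (m+2)) : ℕ) < m := by
      left
      simp only [Fin.coe_castSucc]
      omega
    rw [if_pos h1, if_neg]
    intro hc
    have h2 := congrArg (fun x => ((x.1 : Fin (m+2)) : ℕ)) hc
    simp only [Fin.coe_castSucc, Fin.val_mk] at h2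
    omega

lemma ct_trailing_vcat_sel (Q11 Q12 Q21 Q22 : Matrix (Fin L) (Fin L) ℂ) :
    (trailingTwo (m := m) Q11 Q12 Q21 Q22 * vcat (sel m L) (0 : Matrix (Fin L) (Fin L) ℂ))ᴴ
        * stackZero (1 : Matrix (Fin (m+1) × Fin L) (Fin (m+1) × Fin L) ℂ)
      = Matrix.of (fun (a : Fin L) (c : Fin (m+1) × Fin L) =>
          if (c.1 : ℕ) = m then (starRingEnd ℂ) (Q11 c.2 a) else 0) := by
  have hTv : ∀ (r : Fin (m+2) × Fin L) (a : Fin L),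
      (trailingTwo (m := m) Q11 Q12 Q21 Q22 * vcat (sel m L) (0 : Matrix (Fin L) (Fin L) ℂ)) r a
        = trailingTwo (m := m) Q11 Q12 Q21 Q22 r ((⟨m, by omega⟩ : Fin (m+2)), a) := by
    intro r a
    rw [Matrix.mul_apply]
    rw [Finset.sum_congr rfl fun kk _ => by rw [vcat_sel_zero]]
    simp [mul_ite, Finset.sum_ite_eq']
  ext a c
  rw [Matrix.mul_apply, sum_split (f := fun k =>
    (trailingTwo (m := m) Q11 Q12 Q21 Q22 * vcat (sel m L) (0 : Matrix (Fin L) (Fin L) ℂ))ᴴ a k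
      * stackZero (1 : Matrix (Fin (m+1) × Fin L) (Fin (m+1) × Fin L) ℂ) k c)]
  simp only [Matrix.conjTranspose_apply, stackZero_emb, stackZero_last, mul_zero,
    Finset.sum_const_zero, add_zero]
  rw [Finset.sum_congr rfl fun k _ => by
    rw [hTv, Matrix.one_apply, mul_ite, mul_one, mul_zero]]
  simp only [Finset.sum_ite_eq', Finset.mem_univ, if_true, Matrix.of_apply]
  rw [trailingTwo_col_m]
  by_cases h : (c.1 : ℕ) = m <;> simp [h]

lemma Kmat_sq (Q11 : Matrix (Fin L) (Fin L) ℂ) :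
    (Matrix.of (fun (a : Fin L) (c : Fin (m+1) × Fin L) =>
        if (c.1 : ℕ) = m then (starRingEnd ℂ) (Q11 c.2 a) else 0))
      * (Matrix.of (fun (a : Fin L) (c : Fin (m+1) × Fin L) =>
        if (c.1 : ℕ) = m then (starRingEnd ℂ) (Q11 c.2 a) else 0))ᴴ = Q11ᴴ * Q11 := by
  set Km := Matrix.of (fun (a : Fin L) (c : Fin (m+1) × Fin L) =>
    if (c.1 : ℕ) = m then (starRingEnd ℂ) (Q11 c.2 a) else 0) with hKm
  ext a b
  rw [Matrix.mul_apply, sum_split (f := fun c => Km a c * Kmᴴ c b)]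
  have h1 : ∀ k : Fin m × Fin L, Km a (k.1.castSucc, k.2) * Kmᴴ (k.1.castSucc, k.2) b = 0 := by
    intro k
    have hk : ¬ ((k.1 : ℕ) = m) := by
      have := k.1.isLt
      omega
    simp [hKm, Matrix.conjTranspose_apply, hk]
  have h2 : ∀ l : Fin L, Km a (Fin.last m, l) * Kmᴴ (Fin.last m, l) b
      = (starRingEnd ℂ) (Q11 l a) * Q11 l b := by
    intro l
    simp [hKm, Matrix.conjTranspose_apply]
  rw [Finset.sum_congr rfl fun k _ => h1 k, Finset.sum_congr rfl fun l _ => h2 l]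
  simp [Matrix.mul_apply, Matrix.conjTranspose_apply]


end Blocks
end Stmt19Aux

/-- The cosines of the principal angles between the column space of
the previous block GMRES residual `F_{j-1}^(G)` and the `j`-th minimum-residual
constraint space `A 𝕂_j(A, F₀)` are the singular values of `Q_j^(11)`. -/
theorem stmt19 {n L p : ℕ} (D : BlockArnoldi n L p)
    (Q11f Q12f Q21f Q22f : ℕ → Matrix (Fin L) (Fin L) ℂ)
    (hQ_unit : ∀ i : Fin (p+1),
      (trailingTwo (m := (i : ℕ)) (Q11f ((i : ℕ)+1)) (Q12f ((i : ℕ)+1))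
          (Q21f ((i : ℕ)+1)) (Q22f ((i : ℕ)+1)))ᴴ *
        trailingTwo (m := (i : ℕ)) (Q11f ((i : ℕ)+1)) (Q12f ((i : ℕ)+1))
          (Q21f ((i : ℕ)+1)) (Q22f ((i : ℕ)+1)) = 1)
    (hQR_zero : ∀ i : Fin (p+1), ∀ (a : Fin L) c,
      (QbarFam Q11f Q12f Q21f Q22f ((i : ℕ)+1) *
        D.Hlead ((i : ℕ)+1) (Nat.succ_le_of_lt i.isLt)) (Fin.last ((i : ℕ)+1), a) c = 0)
    (hQR_ut : ∀ i : Fin (p+1),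
      utBig ((QbarFam Q11f Q12f Q21f Q22f ((i : ℕ)+1) *
        D.Hlead ((i : ℕ)+1) (Nat.succ_le_of_lt i.isLt)).submatrix
          (Prod.map Fin.castSucc id) id))
    (hQR_inv : ∀ i : Fin (p+1),
      IsUnit ((QbarFam Q11f Q12f Q21f Q22f ((i : ℕ)+1) *
        D.Hlead ((i : ℕ)+1) (Nat.succ_le_of_lt i.isLt)).submatrix
          (Prod.map Fin.castSucc id) id))
    (Yprev : Matrix (Fin p × Fin L) (Fin L) ℂ) (hYprev : IsBlockGMRESprev D Yprev)
    (hF : (D.B - D.A * (D.X0 + D.Wprev * Yprev)).rank = L)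
    (U : Matrix (Fin n) (Fin L) ℂ) (hU_orth : Uᴴ * U = 1)
    (hU_span : colSpace U = colSpace (D.B - D.A * (D.X0 + D.Wprev * Yprev)))
    (M : Matrix (Fin n) (Fin (p+1) × Fin L) ℂ) (hM_orth : Mᴴ * M = 1)
    (hM_span : colSpace M =
      Submodule.map (D.A).mulVecLin (blockKrylov D.A (D.B - D.A * D.X0) (p+1))) :
    svalsMultiset (Uᴴ * M) = svalsMultiset (Q11f (p+1)) := by
  classical
  -- unitarity of the accumulated factors
  have hfam : ∀ i, i ≤ p + 1 →
      (QbarFam Q11f Q12f Q21f Q22f i)ᴴ * QbarFam Q11f Q12f Q21f Q22f i = 1 := by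
    intro i
    induction i with
    | zero =>
      intro _
      show (1 : Matrix (Fin 1 × Fin L) (Fin 1 × Fin L) ℂ)ᴴ * 1 = 1
      simp
    | succ k ih =>
      intro hk
      have hT : (trailingTwo (m := k) (Q11f (k+1)) (Q12f (k+1)) (Q21f (k+1)) (Q22f (k+1)))ᴴ *
          trailingTwo (m := k) (Q11f (k+1)) (Q12f (k+1)) (Q21f (k+1)) (Q22f (k+1)) = 1 :=
        hQ_unit ⟨k, by omega⟩
      have hQk := ih (by omega)
      show (trailingTwo (m := k) (Q11f (k+1)) (Q12f (k+1)) (Q21f (k+1)) (Q22f (k+1)) *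
          extendOne (QbarFam Q11f Q12f Q21f Q22f k))ᴴ *
          (trailingTwo (m := k) (Q11f (k+1)) (Q12f (k+1)) (Q21f (k+1)) (Q22f (k+1)) *
          extendOne (QbarFam Q11f Q12f Q21f Q22f k)) = 1
      rw [Matrix.conjTranspose_mul, Matrix.mul_assoc,
        ← Matrix.mul_assoc ((trailingTwo (m := k) (Q11f (k+1)) (Q12f (k+1)) (Q21f (k+1))
          (Q22f (k+1)))ᴴ), hT, Matrix.one_mul, Stmt19Aux.extendOne_conjTranspose,
        Stmt19Aux.extendOne_mul, hQk, Stmt19Aux.extendOne_one]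
  have hQbU : (QbarFam Q11f Q12f Q21f Q22f p)ᴴ * QbarFam Q11f Q12f Q21f Q22f p = 1 :=
    hfam p (by omega)
  have hQbU' : QbarFam Q11f Q12f Q21f Q22f p * (QbarFam Q11f Q12f Q21f Q22f p)ᴴ = 1 :=
    mul_eq_one_comm.mp hQbU
  have hQfU : (QbarFam Q11f Q12f Q21f Q22f (p+1))ᴴ * QbarFam Q11f Q12f Q21f Q22f (p+1) = 1 :=
    hfam (p+1) le_rfl
  have hQfU' : QbarFam Q11f Q12f Q21f Q22f (p+1) * (QbarFam Q11f Q12f Q21f Q22f (p+1))ᴴ = 1 :=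
    mul_eq_one_comm.mp hQfU
  -- QR factorization of Hprev
  obtain ⟨Rp, hqrp, hRp⟩ : ∃ Rp : Matrix (Fin p × Fin L) (Fin p × Fin L) ℂ,
      QbarFam Q11f Q12f Q21f Q22f p * D.Hprev = stackZero Rp ∧ IsUnit Rp := by
    rcases Nat.eq_zero_or_pos p with hp0 | hp0
    · subst hp0
      refine ⟨1, ?_, isUnit_one⟩
      ext r c
      exact absurd c.1.isLt (by omega)
    · obtain ⟨q, rfl⟩ : ∃ q, p = q + 1 := ⟨p - 1, by omega⟩
      have hq : q < q + 1 + 1 := by omega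
      have hlead : D.Hlead (((⟨q, hq⟩ : Fin (q+1+1)) : ℕ)+1)
          (Nat.succ_le_of_lt (⟨q, hq⟩ : Fin (q+1+1)).isLt) = D.Hprev := by
        ext r c
        show D.Hbar _ _ = D.Hbar _ _
        congr 1 <;> exact Prod.ext (Fin.ext rfl) rfl
      have hz := hQR_zero ⟨q, hq⟩
      have hinv := hQR_inv ⟨q, hq⟩
      rw [hlead] at hz hinv
      refine ⟨(QbarFam Q11f Q12f Q21f Q22f (q+1) * D.Hprev).submatrix
        (Prod.map Fin.castSucc id) id, ?_, hinv⟩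
      apply Stmt19Aux.matrix_ext_block
      · intro k j
        rw [Stmt19Aux.stackZero_emb]
        rfl
      · intro l j
        rw [Stmt19Aux.stackZero_last]
        exact hz l j
  -- QR factorization of Hbar
  have hleadf : D.Hlead (((Fin.last p : Fin (p+1)) : ℕ)+1)
      (Nat.succ_le_of_lt (Fin.last p).isLt) = D.Hbar := by
    ext r c
    show D.Hbar _ _ = D.Hbar _ _
    congr 1 <;> exact Prod.ext (Fin.ext rfl) rfl
  have hzf := hQR_zero (Fin.last p)
  have hinvf := hQR_inv (Fin.last p)
  rw [hleadf] at hzf hinvf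
  set RjM : Matrix (Fin (p+1) × Fin L) (Fin (p+1) × Fin L) ℂ :=
    (QbarFam Q11f Q12f Q21f Q22f (p+1) * D.Hbar).submatrix (Prod.map Fin.castSucc id) id
    with hRjdef
  have hqrf : QbarFam Q11f Q12f Q21f Q22f (p+1) * D.Hbar = stackZero RjM := by
    apply Stmt19Aux.matrix_ext_block
    · intro k j
      rw [Stmt19Aux.stackZero_emb]
      rfl
    · intro l j
      rw [Stmt19Aux.stackZero_last]
      exact hzf l j
  -- residual coordinates from the previous GMRES minimization
  have hmin := hYprev.1
  have htop0 := Stmt19Aux.key_min (QbarFam Q11f Q12f Q21f Q22f p) hQbU D.Hprev Rp hqrp hRp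
    (EL (p+1) L * D.S0) Yprev hmin
  set Ct : Matrix (Fin L) (Fin L) ℂ := Matrix.of (fun (l : Fin L) (b : Fin L) =>
    (QbarFam Q11f Q12f Q21f Q22f p * (EL (p+1) L * D.S0)) (Fin.last p, l) b) with hCtdef
  have hQg : QbarFam Q11f Q12f Q21f Q22f p * (EL (p+1) L * D.S0 - D.Hprev * Yprev)
      = Stmt19Aux.sel p L * Ct := by
    apply Stmt19Aux.matrix_ext_block
    · intro k j
      have h2 := congrFun (congrFun htop0 k) j
      simp only [Matrix.submatrix_apply, Matrix.zero_apply, id_eq] at h2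
      have h3 : QbarFam Q11f Q12f Q21f Q22f p * (EL (p+1) L * D.S0 - D.Hprev * Yprev)
          = -(QbarFam Q11f Q12f Q21f Q22f p * (D.Hprev * Yprev - EL (p+1) L * D.S0)) := by
        rw [← Matrix.mul_neg, neg_sub]
      rw [h3, Matrix.neg_apply, h2, neg_zero, Stmt19Aux.sel_mul_emb]
    · intro l j
      rw [Stmt19Aux.sel_mul_last, Matrix.mul_sub, ← Matrix.mul_assoc
        (QbarFam Q11f Q12f Q21f Q22f p) D.Hprev Yprev, hqrp, Matrix.sub_apply,
        Stmt19Aux.stackZero_mul_last, sub_zero]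
      rfl
  have hg : EL (p+1) L * D.S0 - D.Hprev * Yprev
      = (QbarFam Q11f Q12f Q21f Q22f p)ᴴ * (Stmt19Aux.sel p L * Ct) := by
    rw [← hQg, ← Matrix.mul_assoc ((QbarFam Q11f Q12f Q21f Q22f p)ᴴ)
      (QbarFam Q11f Q12f Q21f Q22f p), hQbU, Matrix.one_mul]
  -- A * Wprev through the Arnoldi relation
  have hWprev : D.A * D.Wprev = D.W * vcat D.Hprev (0 : Matrix (Fin L) (Fin p × Fin L) ℂ) := by
    have h2 : D.A * D.Wprev = (D.A * D.W.submatrix id (Prod.map Fin.castSucc id)).submatrix id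
        (Prod.map Fin.castSucc id) := by
      ext r c
      rcases c with ⟨c1, c2⟩
      simp [Matrix.mul_apply, BlockArnoldi.Wprev, Prod.map]
    rw [h2, D.arnoldi]
    have h3 : (D.W * D.Hbar).submatrix id (Prod.map Fin.castSucc id)
        = D.W * D.Hbar.submatrix id (Prod.map Fin.castSucc id) := by
      ext r c
      simp [Matrix.mul_apply]
    rw [h3]
    congr 1
    apply Stmt19Aux.matrix_ext_block
    · intro k j
      rw [Stmt19Aux.vcat_emb]
      rfl
    · intro l j
      rw [Stmt19Aux.vcat_last]
      show D.Hbar (Fin.last (p+1), l) (j.1.castSucc, j.2) = 0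
      apply D.hess
      have := j.1.isLt
      simp only [Fin.coe_castSucc, Fin.val_last]
      omega
  have hB0 : D.B - D.A * D.X0 = D.W * (EL (p+2) L * D.S0) := by
    rw [D.F0_eq, ← Matrix.mul_assoc]
    congr 1
    exact (Stmt19Aux.mul_EL D.W).symm
  -- factor the residual
  set Pp : Matrix (Fin n) (Fin L) ℂ :=
    D.W * vcat ((QbarFam Q11f Q12f Q21f Q22f p)ᴴ * Stmt19Aux.sel p L)
      (0 : Matrix (Fin L) (Fin L) ℂ) with hPpdef
  have hFfact : D.B - D.A * (D.X0 + D.Wprev * Yprev) = Pp * Ct := by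
    calc D.B - D.A * (D.X0 + D.Wprev * Yprev)
        = (D.B - D.A * D.X0) - (D.A * D.Wprev) * Yprev := by
          rw [Matrix.mul_add, sub_add_eq_sub_sub, Matrix.mul_assoc]
      _ = D.W * (EL (p+2) L * D.S0)
          - D.W * (vcat D.Hprev (0 : Matrix (Fin L) (Fin p × Fin L) ℂ) * Yprev) := by
          rw [hB0, hWprev, Matrix.mul_assoc]
      _ = D.W * (EL (p+2) L * D.S0
          - vcat D.Hprev (0 : Matrix (Fin L) (Fin p × Fin L) ℂ) * Yprev) := by
          rw [Matrix.mul_sub]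
      _ = D.W * vcat (EL (p+1) L * D.S0 - D.Hprev * Yprev) (0 : Matrix (Fin L) (Fin L) ℂ) := by
          rw [Stmt19Aux.EL_succ_split, Stmt19Aux.vcat_mul, Matrix.zero_mul,
            Stmt19Aux.vcat_sub, sub_zero]
      _ = D.W * vcat (((QbarFam Q11f Q12f Q21f Q22f p)ᴴ * Stmt19Aux.sel p L) * Ct)
          (0 : Matrix (Fin L) (Fin L) ℂ) := by
          rw [hg, Matrix.mul_assoc]
      _ = Pp * Ct := by
          rw [hPpdef, Matrix.mul_assoc D.W, Stmt19Aux.vcat_mul, Matrix.zero_mul]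
  have hPpOrth : Ppᴴ * Pp = 1 := by
    rw [hPpdef, Matrix.conjTranspose_mul, Matrix.mul_assoc, ← Matrix.mul_assoc D.Wᴴ, D.orth,
      Matrix.one_mul, Stmt19Aux.vcatCT_mul_vcat, Matrix.conjTranspose_zero, Matrix.mul_zero,
      add_zero, Matrix.conjTranspose_mul, Matrix.conjTranspose_conjTranspose, Matrix.mul_assoc,
      ← Matrix.mul_assoc (QbarFam Q11f Q12f Q21f Q22f p), hQbU', Matrix.one_mul,
      Stmt19Aux.selCT_mul_sel]
  -- Ct has full rank
  have hrank : (Pp * Ct).rank = L := by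
    rw [← hFfact]
    exact hF
  have hCtsurj : Function.Surjective Ct.mulVecLin := by
    apply Stmt19Aux.surj_of_rank_eq
    have h1 : (Pp * Ct).rank ≤ Ct.rank := Matrix.rank_mul_le_right _ _
    have h2 : Ct.rank ≤ Fintype.card (Fin L) := Matrix.rank_le_card_width Ct
    rw [Fintype.card_fin] at h2
    omega
  have hUP : colSpace U = colSpace Pp := by
    rw [hU_span, hFfact, Stmt19Aux.colSpace_mul_of_surj _ _ hCtsurj]
  obtain ⟨V, hV⟩ := Stmt19Aux.factor_through Pp U (le_of_eq hUP)
  have hVU : Vᴴ * V = 1 := by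
    have h1 : Uᴴ * U = Vᴴ * V := by
      rw [hV, Matrix.conjTranspose_mul, Matrix.mul_assoc, ← Matrix.mul_assoc Ppᴴ, hPpOrth,
        Matrix.one_mul]
    rw [← h1, hU_orth]
  have hVU' : V * Vᴴ = 1 := mul_eq_one_comm.mp hVU
  -- the orthonormal basis of the constraint space
  set G : Matrix (Fin n) (Fin (p+1) × Fin L) ℂ :=
    D.W * ((QbarFam Q11f Q12f Q21f Q22f (p+1))ᴴ *
      stackZero (1 : Matrix (Fin (p+1) × Fin L) (Fin (p+1) × Fin L) ℂ)) with hGdef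
  have hWHbar : D.W * D.Hbar = G * RjM := by
    calc D.W * D.Hbar
        = D.W * (((QbarFam Q11f Q12f Q21f Q22f (p+1))ᴴ * QbarFam Q11f Q12f Q21f Q22f (p+1))
          * D.Hbar) := by rw [hQfU, Matrix.one_mul]
      _ = D.W * ((QbarFam Q11f Q12f Q21f Q22f (p+1))ᴴ * stackZero RjM) := by
          rw [Matrix.mul_assoc, hqrf]
      _ = D.W * ((QbarFam Q11f Q12f Q21f Q22f (p+1))ᴴ *
          (stackZero (1 : Matrix (Fin (p+1) × Fin L) (Fin (p+1) × Fin L) ℂ) * RjM)) := by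
          rw [Stmt19Aux.stackZero_mul, Matrix.one_mul]
      _ = G * RjM := by
          rw [hGdef, Matrix.mul_assoc, Matrix.mul_assoc]
  have hGorth : Gᴴ * G = 1 := by
    rw [hGdef, Matrix.conjTranspose_mul, Matrix.mul_assoc, ← Matrix.mul_assoc D.Wᴴ, D.orth,
      Matrix.one_mul, Matrix.conjTranspose_mul, Matrix.conjTranspose_conjTranspose,
      Matrix.mul_assoc, ← Matrix.mul_assoc (QbarFam Q11f Q12f Q21f Q22f (p+1)), hQfU',
      Matrix.one_mul, Stmt19Aux.stackZeroCT_mul_stackZero, Matrix.conjTranspose_one,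
      Matrix.one_mul]
  -- colSpace M = colSpace G
  have hcol : ∀ (j : Fin (p+1) × Fin L),
      (fun r => (D.A * D.W.submatrix id (Prod.map Fin.castSucc id)) r j)
        = (D.A).mulVecLin (fun i => D.W i (j.1.castSucc, j.2)) := by
    intro j
    funext r
    rcases j with ⟨j1, j2⟩
    simp [Matrix.mulVecLin_apply, Matrix.mulVec, dotProduct, Matrix.mul_apply, Prod.map]
  have hkry : Submodule.map (D.A).mulVecLin (blockKrylov D.A (D.B - D.A * D.X0) (p+1))
      = colSpace (D.W * D.Hbar) := by
    rw [D.span (p+1) (by omega), Submodule.map_span, ← D.arnoldi]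
    unfold colSpace
    congr 1
    ext x
    simp only [Set.mem_image, Set.mem_range, Set.mem_setOf_eq]
    constructor
    · rintro ⟨v, ⟨c, hc, rfl⟩, rfl⟩
      refine ⟨(⟨(c.1 : ℕ), hc⟩, c.2), ?_⟩
      rw [hcol]
      exact congrArg _ (funext fun i => congrArg (D.W i) (Prod.ext (Fin.ext rfl) rfl))
    · rintro ⟨j, rfl⟩
      refine ⟨fun r => D.W r (j.1.castSucc, j.2), ⟨(j.1.castSucc, j.2), ?_, rfl⟩, (hcol j).symm⟩
      simpa using j.1.isLt
  have hinvf' : IsUnit RjM := hinvf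
  have hMG : colSpace M = colSpace G := by
    rw [hM_span, hkry, hWHbar]
    exact Stmt19Aux.colSpace_mul_of_surj _ _ (Stmt19Aux.surj_of_isUnit hinvf')
  obtain ⟨V', hV'⟩ := Stmt19Aux.factor_through G M (le_of_eq hMG)
  have hV'U : V'ᴴ * V' = 1 := by
    have h1 : Mᴴ * M = V'ᴴ * V' := by
      rw [hV', Matrix.conjTranspose_mul, Matrix.mul_assoc, ← Matrix.mul_assoc Gᴴ, hGorth,
        Matrix.one_mul]
    rw [← h1, hM_orth]
  have hV'U' : V' * V'ᴴ = 1 := mul_eq_one_comm.mp hV'U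
  -- compute Ppᴴ * G
  set Kmat : Matrix (Fin L) (Fin (p+1) × Fin L) ℂ :=
    Matrix.of (fun (a : Fin L) (c : Fin (p+1) × Fin L) =>
      if (c.1 : ℕ) = p then (starRingEnd ℂ) (Q11f (p+1) c.2 a) else 0) with hKdef
  have hQfvX : QbarFam Q11f Q12f Q21f Q22f (p+1) *
      vcat ((QbarFam Q11f Q12f Q21f Q22f p)ᴴ * Stmt19Aux.sel p L)
        (0 : Matrix (Fin L) (Fin L) ℂ)
      = trailingTwo (m := p) (Q11f (p+1)) (Q12f (p+1)) (Q21f (p+1)) (Q22f (p+1)) *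
        vcat (Stmt19Aux.sel p L) (0 : Matrix (Fin L) (Fin L) ℂ) := by
    have hunfold : QbarFam Q11f Q12f Q21f Q22f (p+1)
        = trailingTwo (m := p) (Q11f (p+1)) (Q12f (p+1)) (Q21f (p+1)) (Q22f (p+1)) *
          extendOne (QbarFam Q11f Q12f Q21f Q22f p) := rfl
    rw [hunfold, Matrix.mul_assoc, Stmt19Aux.extendOne_mul_vcat, ← Matrix.mul_assoc
      (QbarFam Q11f Q12f Q21f Q22f p), hQbU', Matrix.one_mul]
  have hPpG : Ppᴴ * G = Kmat := by
    rw [hPpdef, hGdef, hKdef,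
      Matrix.conjTranspose_mul D.W (vcat ((QbarFam Q11f Q12f Q21f Q22f p)ᴴ * Stmt19Aux.sel p L)
        (0 : Matrix (Fin L) (Fin L) ℂ)),
      Matrix.mul_assoc (vcat ((QbarFam Q11f Q12f Q21f Q22f p)ᴴ * Stmt19Aux.sel p L)
        (0 : Matrix (Fin L) (Fin L) ℂ))ᴴ D.Wᴴ,
      ← Matrix.mul_assoc D.Wᴴ D.W, D.orth, Matrix.one_mul,
      ← Matrix.mul_assoc _ ((QbarFam Q11f Q12f Q21f Q22f (p+1))ᴴ),
      ← Matrix.conjTranspose_mul (QbarFam Q11f Q12f Q21f Q22f (p+1)), hQfvX,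
      Stmt19Aux.ct_trailing_vcat_sel]
  have hKK : Kmat * Kmatᴴ = (Q11f (p+1))ᴴ * Q11f (p+1) := by
    rw [hKdef]
    exact Stmt19Aux.Kmat_sq (Q11f (p+1))
  -- the final computation
  have hUM : Uᴴ * M = Vᴴ * Kmat * V' := by
    calc Uᴴ * M = (Pp * V)ᴴ * (G * V') := by rw [hV, hV']
      _ = Vᴴ * (Ppᴴ * (G * V')) := by
          rw [Matrix.conjTranspose_mul Pp V, Matrix.mul_assoc Vᴴ Ppᴴ]
      _ = Vᴴ * ((Ppᴴ * G) * V') := by rw [← Matrix.mul_assoc Ppᴴ G V']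
      _ = Vᴴ * Kmat * V' := by rw [hPpG, ← Matrix.mul_assoc Vᴴ Kmat V']
  have hprod : (Uᴴ * M) * (Uᴴ * M)ᴴ
      = Vᴴ * (((Q11f (p+1))ᴴ * Q11f (p+1)) * V) := by
    calc (Uᴴ * M) * (Uᴴ * M)ᴴ
        = (Vᴴ * Kmat * V') * (V'ᴴ * (Kmatᴴ * V)) := by
          rw [hUM, Matrix.conjTranspose_mul (Vᴴ * Kmat) V',
            Matrix.conjTranspose_mul Vᴴ Kmat, Matrix.conjTranspose_conjTranspose]
      _ = (Vᴴ * Kmat) * ((V' * V'ᴴ) * (Kmatᴴ * V)) := by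
          rw [Matrix.mul_assoc (Vᴴ * Kmat) V', ← Matrix.mul_assoc V' V'ᴴ (Kmatᴴ * V)]
      _ = (Vᴴ * Kmat) * (Kmatᴴ * V) := by rw [hV'U', Matrix.one_mul]
      _ = Vᴴ * ((Kmat * Kmatᴴ) * V) := by
          rw [Matrix.mul_assoc Vᴴ Kmat (Kmatᴴ * V), ← Matrix.mul_assoc Kmat Kmatᴴ V]
      _ = Vᴴ * (((Q11f (p+1))ᴴ * Q11f (p+1)) * V) := by rw [hKK]
  apply Stmt19Aux.svals_eq_of_charpoly
  rw [hprod, Stmt19Aux.charpoly_mul_comm Vᴴ (((Q11f (p+1))ᴴ * Q11f (p+1)) * V),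
    Matrix.mul_assoc ((Q11f (p+1))ᴴ * Q11f (p+1)) V Vᴴ, hVU', Matrix.mul_one,
    Stmt19Aux.charpoly_mul_comm]

end
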